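/- Let V : ℝ^d → ℝ^d be C¹-smooth in a neighborhood of a point x* ∈ X (X closed convex), and suppose the Jacobian DV(x*) satisfies wᵀ DV(x*) w > 0 for every nonzero w in the tangent cone of X at x*. Then there exist r > 0 and α > 0 such that ⟨V(x) - V(x*), x - x*⟩ ≥ α‖x - x*‖² for all x ∈ X with ‖x - x*‖ ≤ r. -/

import Mathlib

open scoped RealInnerProductSpace
open Filter Topology Metric Set

/-- Any unit vector in the closure of the cone of feasible directions of a convex set
belongs to the tangent cone. -/
lemma aux_closure_cone_subset_tangent {d : ℕ}
    {X : Set (EuclideanSpace ℝ (Fin d))} (hcv : Convex ℝ X)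
    {xstar : EuclideanSpace ℝ (Fin d)} (hxs : xstar ∈ X)
    {w : EuclideanSpace ℝ (Fin d)} (hw : ‖w‖ = 1)
    (hwc : w ∈ closure {v | ∃ x ∈ X, ∃ t : ℝ, 0 ≤ t ∧ v = t • (x - xstar)}) :
    w ∈ tangentConeAt ℝ X xstar := by
  obtain ⟨v, hv, hvw⟩ := mem_closure_iff_seq_limit.1 hwc
  choose xn hxn tn htn hvn using hv
  refine mem_tangentConeAt_iff_exists_seq_norm_tendsto_atTop.2
    ⟨fun n => if tn n = 0 then (n + 1 : ℝ) else (n + 1) * tn n / min (tn n) 1,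
    fun n => (min (tn n) 1 / (n + 1)) • (xn n - xstar), ?_, ?_, ?_⟩
  pick_goal 2
  · refine Eventually.of_forall fun n => ?_
    have h1 : (0:ℝ) ≤ min (tn n) 1 / (n + 1) :=
      div_nonneg (le_min (htn n) one_pos.le) (by positivity)
    have h2 : min (tn n) 1 / (n + 1) ≤ 1 := by
      apply div_le_one_of_le₀ (le_trans (min_le_right _ _) (by norm_num)) (by positivity)
    exact hcv.add_smul_sub_mem hxs (hxn n) ⟨h1, h2⟩
  · have hge : ∀ n : ℕ, (n + 1 : ℝ) ≤
        ‖(if tn n = 0 then (n + 1 : ℝ) else (n + 1) * tn n / min (tn n) 1)‖ := by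
      intro n
      by_cases h : tn n = 0
      · rw [if_pos h, Real.norm_eq_abs, abs_of_nonneg (by positivity)]
      · have htpos : 0 < tn n := lt_of_le_of_ne (htn n) (Ne.symm h)
        have hmpos : 0 < min (tn n) 1 := lt_min htpos one_pos
        rw [if_neg h, Real.norm_eq_abs, abs_of_nonneg (by positivity), le_div_iff₀ hmpos]
        nlinarith [min_le_left (tn n) 1, Nat.cast_nonneg (α := ℝ) n]
    exact tendsto_atTop_mono hge
      (tendsto_atTop_add_const_right _ 1 tendsto_natCast_atTop_atTop)
  · have : ∀ n, (if tn n = 0 then (n + 1 : ℝ) else (n + 1) * tn n / min (tn n) 1) •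
        ((min (tn n) 1 / (n + 1)) • (xn n - xstar)) = v n := by
      intro n
      by_cases h : tn n = 0
      · simp [h, hvn n]
      · have htpos : 0 < tn n := lt_of_le_of_ne (htn n) (Ne.symm h)
        have hmpos : 0 < min (tn n) 1 := lt_min htpos one_pos
        rw [if_neg h, smul_smul, hvn n]
        congr 1
        field_simp
    simpa only [this] using hvw

/-- Near a point where the Jacobian is positive-definite along tangent directions,
the operator is strongly monotone along rays emanating from that point. -/
theorem regular_point_local_strong {d : ℕ}
    (V : EuclideanSpace ℝ (Fin d) → EuclideanSpace ℝ (Fin d))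
    (X : Set (EuclideanSpace ℝ (Fin d))) (hcl : IsClosed X) (hcv : Convex ℝ X)
    (xstar : EuclideanSpace ℝ (Fin d)) (hxs : xstar ∈ X)
    (DV : EuclideanSpace ℝ (Fin d) → EuclideanSpace ℝ (Fin d) →L[ℝ] EuclideanSpace ℝ (Fin d))
    (ε : ℝ) (hε : 0 < ε)
    (hdiff : ∀ y ∈ Metric.ball xstar ε, HasFDerivAt V (DV y) y)
    (hcont : ContinuousOn DV (Metric.ball xstar ε))
    (hpos : ∀ w ∈ tangentConeAt ℝ X xstar, w ≠ 0 → 0 < ⟪DV xstar w, w⟫) :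
    ∃ r > 0, ∃ α > 0, ∀ x ∈ X, ‖x - xstar‖ ≤ r →
      α * ‖x - xstar‖ ^ 2 ≤ ⟪V x - V xstar, x - xstar⟫ := by
  classical
  set C : Set (EuclideanSpace ℝ (Fin d)) :=
    {v | ∃ x ∈ X, ∃ t : ℝ, 0 ≤ t ∧ v = t • (x - xstar)} with hCdef
  set S : Set (EuclideanSpace ℝ (Fin d)) :=
    Metric.sphere (0 : EuclideanSpace ℝ (Fin d)) 1 ∩ closure C with hSdef
  -- every element of S is a unit vector in the tangent cone
  have hStang : ∀ w ∈ S, ‖w‖ = 1 ∧ w ∈ tangentConeAt ℝ X xstar := by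
    intro w hw
    have hwn : ‖w‖ = 1 := by simpa [mem_sphere_zero_iff_norm] using hw.1
    exact ⟨hwn, aux_closure_cone_subset_tangent hcv hxs hwn hw.2⟩
  -- membership of normalized feasible directions
  have hmemS : ∀ x ∈ X, x ≠ xstar → ‖x - xstar‖⁻¹ • (x - xstar) ∈ S := by
    intro x hx hne
    have hu : x - xstar ≠ 0 := sub_ne_zero.2 hne
    constructor
    · rw [mem_sphere_zero_iff_norm, norm_smul, norm_inv, norm_norm,
        inv_mul_cancel₀ (norm_ne_zero_iff.2 hu)]
    · exact subset_closure ⟨x, hx, ‖x - xstar‖⁻¹, inv_nonneg.2 (norm_nonneg _), rfl⟩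
  rcases S.eq_empty_or_nonempty with hSe | hSne
  · -- degenerate case : X = {xstar} locally
    refine ⟨1, one_pos, 1, one_pos, fun x hx _ => ?_⟩
    have hxe : x = xstar := by
      by_contra hne
      have := hmemS x hx hne
      rw [hSe] at this
      exact this
    simp [hxe]
  -- nonempty case: get minimum of the quadratic form on S
  have hScomp : IsCompact S := (isCompact_sphere _ _).inter_right isClosed_closure
  have hScont : ContinuousOn (fun w => ⟪DV xstar w, w⟫) S :=
    ((DV xstar).continuous.inner continuous_id).continuousOn
  obtain ⟨w0, hw0S, hmin⟩ := hScomp.exists_isMinOn hSne hScont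
  set m : ℝ := ⟪DV xstar w0, w0⟫ with hmdef
  have hm : 0 < m := hpos w0 (hStang w0 hw0S).2
    (norm_ne_zero_iff.1 (by rw [(hStang w0 hw0S).1]; exact one_ne_zero))
  set α : ℝ := m / 2 with hαdef
  have hα : 0 < α := by positivity
  -- continuity of DV at xstar
  have hca : ContinuousAt DV xstar := hcont.continuousAt (Metric.ball_mem_nhds xstar hε)
  obtain ⟨r0, hr0, hDV⟩ := Metric.continuousAt_iff.1 hca α hα
  set r : ℝ := min (r0 / 2) (ε / 2) with hrdef
  have hr : 0 < r := lt_min (by positivity) (by positivity)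
  -- key pointwise bound
  have key : ∀ u : EuclideanSpace ℝ (Fin d), u ≠ 0 → ‖u‖⁻¹ • u ∈ S →
      ∀ y : EuclideanSpace ℝ (Fin d), dist y xstar < r0 → α * ‖u‖ ^ 2 ≤ ⟪DV y u, u⟫ := by
    intro u hu huS y hy
    have hun : ‖u‖ ≠ 0 := norm_ne_zero_iff.2 hu
    have hwn : ‖(‖u‖⁻¹ • u)‖ = 1 := (hStang _ huS).1
    have hwm : m ≤ ⟪DV xstar (‖u‖⁻¹ • u), ‖u‖⁻¹ • u⟫ := hmin huS
    have hop : ‖DV y - DV xstar‖ < α := by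
      have := hDV hy
      rwa [dist_eq_norm] at this
    have hdiffb : |⟪DV y (‖u‖⁻¹ • u) - DV xstar (‖u‖⁻¹ • u), ‖u‖⁻¹ • u⟫| ≤ α := by
      calc |⟪DV y (‖u‖⁻¹ • u) - DV xstar (‖u‖⁻¹ • u), ‖u‖⁻¹ • u⟫|
          ≤ ‖DV y (‖u‖⁻¹ • u) - DV xstar (‖u‖⁻¹ • u)‖ * ‖(‖u‖⁻¹ • u)‖ :=
            abs_real_inner_le_norm _ _
        _ = ‖(DV y - DV xstar) (‖u‖⁻¹ • u)‖ * ‖(‖u‖⁻¹ • u)‖ := by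
            rw [ContinuousLinearMap.sub_apply]
        _ ≤ ‖DV y - DV xstar‖ * ‖(‖u‖⁻¹ • u)‖ * ‖(‖u‖⁻¹ • u)‖ := by
            gcongr; exact (DV y - DV xstar).le_opNorm _
        _ ≤ α := by rw [hwn]; linarith
    have hw_bound : α ≤ ⟪DV y (‖u‖⁻¹ • u), ‖u‖⁻¹ • u⟫ := by
      have h1 : ⟪DV y (‖u‖⁻¹ • u), ‖u‖⁻¹ • u⟫ = ⟪DV xstar (‖u‖⁻¹ • u), ‖u‖⁻¹ • u⟫
          + ⟪DV y (‖u‖⁻¹ • u) - DV xstar (‖u‖⁻¹ • u), ‖u‖⁻¹ • u⟫ := by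
        rw [inner_sub_left]; ring
      have h2 := neg_le_of_abs_le hdiffb
      rw [h1, hαdef]
      linarith
    have hscale : ⟪DV y (‖u‖⁻¹ • u), ‖u‖⁻¹ • u⟫ = ‖u‖⁻¹ * ‖u‖⁻¹ * ⟪DV y u, u⟫ := by
      rw [map_smul, real_inner_smul_left, real_inner_smul_right]; ring
    rw [hscale] at hw_bound
    generalize hI : ⟪DV y u, u⟫ = I at hw_bound ⊢
    calc α * ‖u‖ ^ 2 ≤ (‖u‖⁻¹ * ‖u‖⁻¹ * I) * ‖u‖ ^ 2 :=
          mul_le_mul_of_nonneg_right hw_bound (by positivity)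
      _ = I * (‖u‖⁻¹ * ‖u‖) ^ 2 := by ring
      _ = I := by rw [inv_mul_cancel₀ hun]; ring
  refine ⟨r, hr, α, hα, fun x hx hxr => ?_⟩
  by_cases hxe : x = xstar
  · simp [hxe]
  set u : EuclideanSpace ℝ (Fin d) := x - xstar with hudef
  have hu : u ≠ 0 := sub_ne_zero.2 hxe
  have huS : ‖u‖⁻¹ • u ∈ S := hmemS x hx hxe
  -- points along the segment stay in the ball
  have hmem : ∀ t : ℝ, t ∈ Set.Icc (0:ℝ) 1 → xstar + t • u ∈ Metric.ball xstar ε := by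
    intro t ht
    rw [Metric.mem_ball, dist_eq_norm, add_sub_cancel_left, norm_smul]
    calc ‖t‖ * ‖u‖ ≤ 1 * ‖u‖ := by
          apply mul_le_mul_of_nonneg_right _ (norm_nonneg _)
          rw [Real.norm_eq_abs, abs_of_nonneg ht.1]; exact ht.2
      _ ≤ r := by rw [one_mul]; exact hxr
      _ < ε := lt_of_le_of_lt (min_le_right _ _) (by linarith)
  have hmem' : ∀ t : ℝ, t ∈ Set.Icc (0:ℝ) 1 → dist (xstar + t • u) xstar < r0 := by
    intro t ht
    rw [dist_eq_norm, add_sub_cancel_left, norm_smul]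
    calc ‖t‖ * ‖u‖ ≤ 1 * ‖u‖ := by
          apply mul_le_mul_of_nonneg_right _ (norm_nonneg _)
          rw [Real.norm_eq_abs, abs_of_nonneg ht.1]; exact ht.2
      _ ≤ r := by rw [one_mul]; exact hxr
      _ < r0 := lt_of_le_of_lt (min_le_left _ _) (by linarith)
  -- derivative of f t = ⟪V (xstar + t • u), u⟫
  set f : ℝ → ℝ := fun t => ⟪V (xstar + t • u), u⟫ with hfdef
  have hderiv : ∀ t ∈ Set.Icc (0:ℝ) 1,
      HasDerivAt f ⟪DV (xstar + t • u) u, u⟫ t := by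
    intro t ht
    have hline : HasDerivAt (fun s : ℝ => xstar + s • u) u t := by
      simpa using ((hasDerivAt_id t).smul_const u).const_add xstar
    have hV : HasDerivAt (fun s : ℝ => V (xstar + s • u)) (DV (xstar + t • u) u) t :=
      (hdiff _ (hmem t ht)).comp_hasDerivAt t hline
    have := hV.inner ℝ (hasDerivAt_const t u)
    simpa using this
  -- mean value inequality on [0,1]
  have hcontf : ContinuousOn f (Set.Icc 0 1) :=
    fun t ht => ((hderiv t ht).continuousAt).continuousWithinAt
  have hdifff : DifferentiableOn ℝ f (interior (Set.Icc (0:ℝ) 1)) := by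
    intro t ht
    rw [interior_Icc] at ht
    exact ((hderiv t ⟨ht.1.le, ht.2.le⟩).differentiableAt).differentiableWithinAt
  have hbound : ∀ t ∈ interior (Set.Icc (0:ℝ) 1), α * ‖u‖ ^ 2 ≤ deriv f t := by
    intro t ht
    rw [interior_Icc] at ht
    rw [(hderiv t ⟨ht.1.le, ht.2.le⟩).deriv]
    exact key u hu huS _ (hmem' t ⟨ht.1.le, ht.2.le⟩)
  have := (convex_Icc (0:ℝ) 1).mul_sub_le_image_sub_of_le_deriv hcontf hdifff hbound
    0 (Set.left_mem_Icc.2 one_pos.le) 1 (Set.right_mem_Icc.2 one_pos.le) one_pos.le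
  have hf1 : f 1 = ⟪V x, u⟫ := by simp [hfdef, hudef]
  have hf0 : f 0 = ⟪V xstar, u⟫ := by simp [hfdef]
  rw [hf1, hf0, sub_zero, mul_one] at this
  rw [inner_sub_left]
  linarith
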